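/- Let a, b, c ∈ ℝ³, let 0 ≤ ε ≤ 1, and let σ > 0 be such that |⟨a, b × c⟩| ≥ σ·‖a‖·‖b‖·‖c‖. Let ã, b̃, c̃ ∈ ℝ³ satisfy |ã_i − a_i| ≤ ε·|a_i|, |b̃_i − b_i| ≤ ε·|b_i|, and |c̃_i − c_i| ≤ ε·|c_i| for each i ∈ {1,2,3}. Then |⟨ã, b̃ × c̃⟩ − ⟨a, b × c⟩| ≤ (42·ε/σ)·|⟨a, b × c⟩|; that is, the relative error of the perturbed triple product is at most 42·ε/σ. -/

import Mathlib

open scoped RealInnerProductSpace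

/-- The cross product on `ℝ³`. -/
noncomputable def cross3 (a b : EuclideanSpace ℝ (Fin 3)) : EuclideanSpace ℝ (Fin 3) :=
  WithLp.toLp 2 (crossProduct (a : Fin 3 → ℝ) (b : Fin 3 → ℝ))

lemma coord_le_norm (a : EuclideanSpace ℝ (Fin 3)) (i : Fin 3) : |a i| ≤ ‖a‖ := by
  rw [EuclideanSpace.norm_eq]
  rw [Real.le_sqrt (abs_nonneg _)]
  have : |a i| ^ 2 ≤ ∑ j, ‖a j‖ ^ 2 := by
    have := Finset.single_le_sum (f := fun j => ‖a j‖ ^ 2) (fun j _ => sq_nonneg _)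
      (Finset.mem_univ i)
    simpa [Real.norm_eq_abs] using this
  simpa using this
  positivity

lemma prod_perturb {x y z x' y' z' ε : ℝ} (hε0 : 0 ≤ ε) (hε1 : ε ≤ 1)
    (hx : |x' - x| ≤ ε * |x|) (hy : |y' - y| ≤ ε * |y|) (hz : |z' - z| ≤ ε * |z|) :
    |x' * y' * z' - x * y * z| ≤ 7 * ε * (|x| * |y| * |z|) := by
  have hy' : |y'| ≤ 2 * |y| := by
    have := abs_sub_abs_le_abs_sub y' y
    nlinarith [abs_nonneg y]
  have hz' : |z'| ≤ 2 * |z| := by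
    have := abs_sub_abs_le_abs_sub z' z
    nlinarith [abs_nonneg z]
  have key : x' * y' * z' - x * y * z
      = (x' - x) * y' * z' + x * (y' - y) * z' + x * y * (z' - z) := by ring
  calc |x' * y' * z' - x * y * z|
      ≤ |(x' - x) * y' * z'| + |x * (y' - y) * z'| + |x * y * (z' - z)| := by
        rw [key]; exact (abs_add_le _ _).trans (by gcongr; exact abs_add_le _ _)
    _ = |x' - x| * |y'| * |z'| + |x| * |y' - y| * |z'| + |x| * |y| * |z' - z| := by
        simp [abs_mul]
    _ ≤ (ε * |x|) * (2 * |y|) * (2 * |z|) + |x| * (ε * |y|) * (2 * |z|)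
        + |x| * |y| * (ε * |z|) := by
        gcongr <;> positivity
    _ = 7 * ε * (|x| * |y| * |z|) := by ring

lemma triple_expand (u v w : EuclideanSpace ℝ (Fin 3)) :
    ⟪u, cross3 v w⟫ = u 0 * (v 1 * w 2) - u 0 * (v 2 * w 1)
      + (u 1 * (v 2 * w 0) - u 1 * (v 0 * w 2))
      + (u 2 * (v 0 * w 1) - u 2 * (v 1 * w 0)) := by
  simp [cross3, crossProduct, PiLp.inner_apply, RCLike.inner_apply, Fin.sum_univ_three]
  ring

theorem stmt_11 (a b c : EuclideanSpace ℝ (Fin 3)) (ε σ : ℝ) (hε0 : 0 ≤ ε) (hε1 : ε ≤ 1)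
    (hσ : 0 < σ) (hlow : σ * (‖a‖ * ‖b‖ * ‖c‖) ≤ |⟪a, cross3 b c⟫|)
    (ta tb tc : EuclideanSpace ℝ (Fin 3))
    (ha : ∀ i : Fin 3, |ta i - a i| ≤ ε * |a i|)
    (hb : ∀ i : Fin 3, |tb i - b i| ≤ ε * |b i|)
    (hc : ∀ i : Fin 3, |tc i - c i| ≤ ε * |c i|) :
    |⟪ta, cross3 tb tc⟫ - ⟪a, cross3 b c⟫| ≤ (42 * ε / σ) * |⟪a, cross3 b c⟫| := by
  set T := ⟪a, cross3 b c⟫ with hT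
  set T' := ⟪ta, cross3 tb tc⟫ with hT'
  set d1 := ta 0 * tb 1 * tc 2 - a 0 * b 1 * c 2 with hd1
  set d2 := a 0 * b 2 * c 1 - ta 0 * tb 2 * tc 1 with hd2
  set d3 := ta 1 * tb 2 * tc 0 - a 1 * b 2 * c 0 with hd3
  set d4 := a 1 * b 0 * c 2 - ta 1 * tb 0 * tc 2 with hd4
  set d5 := ta 2 * tb 0 * tc 1 - a 2 * b 0 * c 1 with hd5
  set d6 := a 2 * b 1 * c 0 - ta 2 * tb 1 * tc 0 with hd6
  have key : T' - T = d1 + d2 + d3 + d4 + d5 + d6 := by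
    rw [hT, hT', triple_expand, triple_expand, hd1, hd2, hd3, hd4, hd5, hd6]; ring
  have e1 := prod_perturb hε0 hε1 (ha 0) (hb 1) (hc 2)
  have e2 := prod_perturb hε0 hε1 (ha 0) (hb 2) (hc 1)
  have e3 := prod_perturb hε0 hε1 (ha 1) (hb 2) (hc 0)
  have e4 := prod_perturb hε0 hε1 (ha 1) (hb 0) (hc 2)
  have e5 := prod_perturb hε0 hε1 (ha 2) (hb 0) (hc 1)
  have e6 := prod_perturb hε0 hε1 (ha 2) (hb 1) (hc 0)
  have hN : ∀ (i j k : Fin 3), |a i| * |b j| * |c k| ≤ ‖a‖ * ‖b‖ * ‖c‖ := by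
    intro i j k
    have := coord_le_norm a i
    have := coord_le_norm b j
    have := coord_le_norm c k
    gcongr <;> first | assumption | exact abs_nonneg _
  have hmain : |T' - T| ≤ 42 * ε * (‖a‖ * ‖b‖ * ‖c‖) := by
    have habs : |T' - T| ≤ |d1| + |d2| + |d3| + |d4| + |d5| + |d6| := by
      rw [key]
      calc |d1 + d2 + d3 + d4 + d5 + d6|
          ≤ |d1 + d2 + d3 + d4 + d5| + |d6| := abs_add_le _ _
        _ ≤ |d1 + d2 + d3 + d4| + |d5| + |d6| := by gcongr; exact abs_add_le _ _
        _ ≤ |d1 + d2 + d3| + |d4| + |d5| + |d6| := by gcongr; exact abs_add_le _ _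
        _ ≤ |d1 + d2| + |d3| + |d4| + |d5| + |d6| := by gcongr; exact abs_add_le _ _
        _ ≤ |d1| + |d2| + |d3| + |d4| + |d5| + |d6| := by gcongr; exact abs_add_le _ _
    have b1 : |d1| ≤ 7 * ε * (‖a‖ * ‖b‖ * ‖c‖) :=
      e1.trans (mul_le_mul_of_nonneg_left (hN 0 1 2) (by positivity))
    have b2 : |d2| ≤ 7 * ε * (‖a‖ * ‖b‖ * ‖c‖) := by
      rw [hd2, abs_sub_comm]; exact e2.trans (mul_le_mul_of_nonneg_left (hN 0 2 1) (by positivity))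
    have b3 : |d3| ≤ 7 * ε * (‖a‖ * ‖b‖ * ‖c‖) :=
      e3.trans (mul_le_mul_of_nonneg_left (hN 1 2 0) (by positivity))
    have b4 : |d4| ≤ 7 * ε * (‖a‖ * ‖b‖ * ‖c‖) := by
      rw [hd4, abs_sub_comm]; exact e4.trans (mul_le_mul_of_nonneg_left (hN 1 0 2) (by positivity))
    have b5 : |d5| ≤ 7 * ε * (‖a‖ * ‖b‖ * ‖c‖) :=
      e5.trans (mul_le_mul_of_nonneg_left (hN 2 0 1) (by positivity))
    have b6 : |d6| ≤ 7 * ε * (‖a‖ * ‖b‖ * ‖c‖) := by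
      rw [hd6, abs_sub_comm]; exact e6.trans (mul_le_mul_of_nonneg_left (hN 2 1 0) (by positivity))
    linarith
  have hNle : ‖a‖ * ‖b‖ * ‖c‖ ≤ |T| / σ := by
    rw [le_div_iff₀ hσ]; linarith
  calc |T' - T| ≤ 42 * ε * (‖a‖ * ‖b‖ * ‖c‖) := hmain
    _ ≤ 42 * ε * (|T| / σ) := by gcongr
    _ = (42 * ε / σ) * |T| := by ring
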